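/- In the lattice of subspaces of a finite-dimensional complex inner product space, for subspaces P and Q, the Sasaki projection P & Q := Q ⊓ (P ⊔ Qᗮ) equals the image of P under the orthogonal projection onto Q. -/

import Mathlib

/-- In the lattice of subspaces of a finite-dimensional complex inner product space,
the Sasaki projection `P & Q := Q ⊓ (P ⊔ Qᗮ)` equals the image of `P` under the
orthogonal projection onto `Q`. -/
theorem sasaki_eq_map_orthogonalProjection
    {V : Type*} [NormedAddCommGroup V] [InnerProductSpace ℂ V] [FiniteDimensional ℂ V]
    (P Q : Submodule ℂ V) :
    Q ⊓ (P ⊔ Qᗮ) =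
      P.map (Q.subtype ∘ₗ (Q.orthogonalProjectionOnto : V →L[ℂ] Q).toLinearMap) := by
  apply le_antisymm
  · rintro x ⟨hxQ, hxPQ⟩
    obtain ⟨p, hp, q, hq, rfl⟩ := Submodule.mem_sup.mp hxPQ
    refine ⟨p, hp, ?_⟩
    have h1 : (Q.orthogonalProjectionOnto (p + q) : V) = p + q :=
      Submodule.starProjection_eq_self_iff.mpr hxQ
    have h2 : Q.orthogonalProjectionOnto q = 0 :=
      Submodule.orthogonalProjectionOnto_apply_of_mem_orthogonal hq
    have h3 : Q.orthogonalProjectionOnto (p + q) = Q.orthogonalProjectionOnto p + Q.orthogonalProjectionOnto q :=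
      map_add _ p q
    simp only [LinearMap.comp_apply, ContinuousLinearMap.coe_coe, Submodule.subtype_apply]
    rw [← h1, h3, h2, add_zero]
  · rintro x ⟨p, hp, rfl⟩
    simp only [LinearMap.comp_apply, ContinuousLinearMap.coe_coe, Submodule.subtype_apply]
    refine ⟨(Q.orthogonalProjectionOnto p).2, ?_⟩
    have h : p - (Q.orthogonalProjectionOnto p : V) ∈ Qᗮ :=
      Submodule.sub_starProjection_mem_orthogonal p
    have : (Q.orthogonalProjectionOnto p : V) = p - (p - (Q.orthogonalProjectionOnto p : V)) := by abel
    rw [this]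
    exact Submodule.sub_mem _ (Submodule.mem_sup_left hp) (Submodule.mem_sup_right h)
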